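/- Lemma 1 (necessity of merging for Liouville): Let G act on a countable set X, μ a probability measure on G such that the induced kernel P_μ is irreducible on X and lazy (P_μ(x,x) ≥ 1/2 for all x). If every bounded P_μ-harmonic function on X is constant, then for any two points x, y ∈ X, lim_{n→∞} ‖μ^{(n)}·x − μ^{(n)}·y‖₁ = 0. -/

import Mathlib

open scoped Classical
open Filter

noncomputable section

variable {G : Type*} [Group G] {X : Type*} [MulAction G X]

/-- Pushforward of a discrete measure `μ` on `G` under the action at `x`. -/
def pushMeas (μ : G → ℝ) (x : X) : X → ℝ :=
  fun y => ∑' g : G, if g • x = y then μ g else 0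

/-- ℓ¹ distance between two functions. -/
def dist1 {Y : Type*} (f g : Y → ℝ) : ℝ := ∑' y, |f y - g y|

/-- Convolution of discrete measures: `(μ ∗ ν)(g) = ∑_h μ(g h⁻¹) ν(h)`. -/
def conv (μ ν : G → ℝ) : G → ℝ := fun g => ∑' h : G, μ (g * h⁻¹) * ν h

/-- Point mass at the identity. -/
def deltaOne : G → ℝ := fun g => if g = 1 then 1 else 0

/-- `n`-fold convolution power `μ^{(n)}` (innermost factor applied first). -/
def convPow (μ : G → ℝ) : ℕ → (G → ℝ)
  | 0 => deltaOne
  | n + 1 => conv (convPow μ n) μ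

/-- `n`-step kernel (matrix power). -/
def kpow {Y : Type*} (P : Y → Y → ℝ) : ℕ → (Y → Y → ℝ)
  | 0 => fun x y => if x = y then 1 else 0
  | n + 1 => fun x y => ∑' z, P x z * kpow P n z y

/-- Transition kernel on `X` induced by `μ`. -/
def transK (μ : G → ℝ) (x y : X) : ℝ := pushMeas μ x y

/-- A function is `P`-harmonic. -/
def IsHarmonic {Y : Type*} (P : Y → Y → ℝ) (h : Y → ℝ) : Prop :=
  ∀ x, h x = ∑' y, P x y * h y

/-- Boundedness of a real function. -/
def BoundedFn {Y : Type*} (h : Y → ℝ) : Prop := ∃ C, ∀ x, |h x| ≤ C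

/-- `μ` is a (discrete) probability measure. -/
def IsProb {G : Type*} (μ : G → ℝ) : Prop := (∀ g, 0 ≤ μ g) ∧ HasSum μ 1

/-! ### Generic summability helpers -/

section helpers

lemma summable_uncurry_of_nonneg {α β : Type*} {f : α → β → ℝ}
    (h0 : ∀ a b, 0 ≤ f a b) (h1 : ∀ a, Summable (f a))
    (h2 : Summable fun a => ∑' b, f a b) :
    Summable (Function.uncurry f) :=
  (summable_prod_of_nonneg (fun p => h0 p.1 p.2)).2 ⟨h1, h2⟩

lemma summable_swap_nonneg {α β : Type*} {f : α → β → ℝ}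
    (h0 : ∀ a b, 0 ≤ f a b) (h1 : ∀ a, Summable (f a))
    (h2 : Summable fun a => ∑' b, f a b) :
    Summable fun b => ∑' a, f a b :=
  (summable_uncurry_of_nonneg h0 h1 h2).prod_symm.prod

lemma tsum_comm_nonneg {α β : Type*} {f : α → β → ℝ}
    (h0 : ∀ a b, 0 ≤ f a b) (h1 : ∀ a, Summable (f a))
    (h2 : Summable fun a => ∑' b, f a b) :
    ∑' b, ∑' a, f a b = ∑' a, ∑' b, f a b :=
  Summable.tsum_comm (summable_uncurry_of_nonneg h0 h1 h2)

lemma tsum_comm_of_bound {α β : Type*} {f g : α → β → ℝ}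
    (hb : ∀ a b, |f a b| ≤ g a b) (h1 : ∀ a, Summable (g a))
    (h2 : Summable fun a => ∑' b, g a b) :
    ∑' b, ∑' a, f a b = ∑' a, ∑' b, f a b := by
  have hg : Summable (Function.uncurry g) :=
    summable_uncurry_of_nonneg (fun a b => (abs_nonneg _).trans (hb a b)) h1 h2
  have habs : Summable fun p : α × β => |Function.uncurry f p| :=
    hg.of_nonneg_of_le (fun p => abs_nonneg _) (fun p => hb p.1 p.2)
  exact Summable.tsum_comm habs.of_abs

lemma le_of_hasSum_nonneg {α : Type*} {f : α → ℝ} {c : ℝ}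
    (h0 : ∀ a, 0 ≤ f a) (h : HasSum f c) (a : α) : f a ≤ c :=
  le_hasSum h a (fun b _ => h0 b)

lemma hasSum_delta {α : Type*} (x : α) : HasSum (fun z => if x = z then (1:ℝ) else 0) 1 := by
  have he : (fun z : α => if x = z then (1:ℝ) else 0) = fun z => if z = x then 1 else 0 :=
    funext fun z => by rw [show (x = z) = (z = x) from propext eq_comm]
  rw [he]; exact hasSum_ite_eq x (1:ℝ)

lemma summable_delta_mul {α : Type*} (x : α) (c : α → ℝ) :
    Summable (fun z => if x = z then c z else 0) := by
  have he : (fun z : α => if x = z then c z else 0) = fun z => if z = x then c x else 0 :=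
    funext fun z => by
      rw [show (x = z) = (z = x) from propext eq_comm]
      rcases eq_or_ne z x with h|h
      · subst h; rfl
      · rw [if_neg h, if_neg h]
  rw [he]; exact (hasSum_ite_eq x (c x)).summable

lemma tsum_delta_mul {α : Type*} (x : α) (c : α → ℝ) :
    ∑' z, (if x = z then c z else 0) = c x := by
  have he : (fun z : α => if x = z then c z else 0) = fun z => if z = x then c x else 0 :=
    funext fun z => by
      rw [show (x = z) = (z = x) from propext eq_comm]
      rcases eq_or_ne z x with h|h
      · subst h; rfl
      · rw [if_neg h, if_neg h]
  rw [he]; exact tsum_ite_eq x (fun _ => c x)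

/-- Applying a stochastic kernel preserves total mass. -/
lemma hasSum_bind {α β : Type*} {a : α → ℝ} {K : α → β → ℝ} {c : ℝ}
    (ha0 : ∀ i, 0 ≤ a i) (ha : HasSum a c)
    (hK0 : ∀ i j, 0 ≤ K i j) (hK : ∀ i, HasSum (K i) 1) :
    HasSum (fun j => ∑' i, a i * K i j) c := by
  have h0 : ∀ i j, 0 ≤ a i * K i j := fun i j => mul_nonneg (ha0 i) (hK0 i j)
  have h1 : ∀ i, Summable fun j => a i * K i j := fun i => (hK i).summable.mul_left _
  have hrow : ∀ i, ∑' j, a i * K i j = a i := fun i => by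
    rw [tsum_mul_left, (hK i).tsum_eq, mul_one]
  have h2 : Summable fun i => ∑' j, a i * K i j :=
    ha.summable.congr fun i => (hrow i).symm
  have hs : Summable fun j => ∑' i, a i * K i j := summable_swap_nonneg h0 h1 h2
  have ht : ∑' j, ∑' i, a i * K i j = c := by
    rw [tsum_comm_nonneg h0 h1 h2]
    calc ∑' i, ∑' j, a i * K i j = ∑' i, a i := tsum_congr hrow
      _ = c := ha.tsum_eq
  exact (Summable.hasSum_iff hs).mpr ht

lemma summable_mul_right_le_one {α : Type*} {c k : α → ℝ}
    (hc0 : ∀ i, 0 ≤ c i) (hc : Summable c) (hk0 : ∀ i, 0 ≤ k i) (hk1 : ∀ i, k i ≤ 1) :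
    Summable fun i => c i * k i :=
  hc.of_nonneg_of_le (fun i => mul_nonneg (hc0 i) (hk0 i))
    (fun i => by
      calc c i * k i ≤ c i * 1 := mul_le_mul_of_nonneg_left (hk1 i) (hc0 i)
        _ = c i := mul_one _)

/-- ℓ¹-contraction of a stochastic kernel. -/
lemma dist1_bind_le {α β : Type*} {a b : α → ℝ} {K : α → β → ℝ}
    (ha : Summable a) (hb : Summable b)
    (hK0 : ∀ i j, 0 ≤ K i j) (hK : ∀ i, HasSum (K i) 1) :
    ∑' j, |(∑' i, a i * K i j) - ∑' i, b i * K i j| ≤ ∑' i, |a i - b i| := by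
  have hK1 : ∀ i j, K i j ≤ 1 := fun i j => le_of_hasSum_nonneg (hK0 i) (hK i) j
  have hd : Summable fun i => |a i - b i| := (ha.sub hb).abs
  have hsm : ∀ (c : α → ℝ), Summable c → ∀ j, Summable fun i => c i * K i j := by
    intro c hc j
    apply Summable.of_abs
    apply hc.abs.of_nonneg_of_le (fun i => abs_nonneg _)
    intro i
    rw [abs_mul]
    calc |c i| * |K i j| ≤ |c i| * 1 := by
          refine mul_le_mul_of_nonneg_left ?_ (abs_nonneg _)
          rw [abs_of_nonneg (hK0 i j)]; exact hK1 i j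
      _ = |c i| := mul_one _
  have hB := hasSum_bind (fun i => abs_nonneg (a i - b i)) hd.hasSum hK0 hK
  have hptwise : ∀ j, |(∑' i, a i * K i j) - ∑' i, b i * K i j|
      ≤ ∑' i, |a i - b i| * K i j := by
    intro j
    rw [← Summable.tsum_sub (hsm a ha j) (hsm b hb j)]
    rw [tsum_congr (fun i => (sub_mul (a i) (b i) (K i j)).symm)]
    have hs2 : Summable fun i => ‖(a i - b i) * K i j‖ := by
      simpa only [Real.norm_eq_abs] using (hsm _ (ha.sub hb) j).abs
    calc |∑' i, (a i - b i) * K i j| ≤ ∑' i, ‖(a i - b i) * K i j‖ := by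
          simpa [Real.norm_eq_abs] using norm_tsum_le_tsum_norm hs2
      _ = ∑' i, |a i - b i| * K i j := tsum_congr fun i => by
          rw [Real.norm_eq_abs, abs_mul, abs_of_nonneg (hK0 i j)]
  have hLHS : Summable fun j => |(∑' i, a i * K i j) - ∑' i, b i * K i j| :=
    hB.summable.of_nonneg_of_le (fun j => abs_nonneg _) hptwise
  calc ∑' j, |(∑' i, a i * K i j) - ∑' i, b i * K i j|
      ≤ ∑' j, ∑' i, |a i - b i| * K i j := Summable.tsum_le_tsum hptwise hLHS hB.summable
    _ = ∑' i, |a i - b i| := hB.tsum_eq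

lemma abs_tsum_le {α : Type*} {f : α → ℝ} (h : Summable fun i => |f i|) :
    |∑' i, f i| ≤ ∑' i, |f i| := by
  have h' : Summable fun i => ‖f i‖ := by
    refine h.congr fun i => ?_
    rw [Real.norm_eq_abs]
  have h2 := norm_tsum_le_tsum_norm h'
  rw [Real.norm_eq_abs] at h2
  calc |∑' i, f i| ≤ ∑' i, ‖f i‖ := h2
    _ = ∑' i, |f i| := tsum_congr fun i => Real.norm_eq_abs (f i)

lemma summable_mul_bounded {α : Type*} {p q : α → ℝ} (hp : Summable fun w => |p w|)
    (hq : ∀ w, |q w| ≤ 1) : Summable fun w => p w * q w := by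
  refine Summable.of_abs ?_
  refine hp.of_nonneg_of_le (fun w => abs_nonneg _) (fun w => ?_)
  rw [abs_mul]
  calc |p w| * |q w| ≤ |p w| * 1 := mul_le_mul_of_nonneg_left (hq w) (abs_nonneg _)
    _ = |p w| := mul_one _

lemma abs_tsum_mul_bounded_le {α : Type*} {p q : α → ℝ} (hp : Summable fun w => |p w|)
    (hq : ∀ w, |q w| ≤ 1) : |∑' w, p w * q w| ≤ ∑' w, |p w| := by
  have hs : Summable fun w => |p w * q w| := by
    refine hp.of_nonneg_of_le (fun w => abs_nonneg _) (fun w => ?_)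
    rw [abs_mul]
    calc |p w| * |q w| ≤ |p w| * 1 := mul_le_mul_of_nonneg_left (hq w) (abs_nonneg _)
      _ = |p w| := mul_one _
  calc |∑' w, p w * q w| ≤ ∑' w, |p w * q w| := abs_tsum_le hs
    _ ≤ ∑' w, |p w| := Summable.tsum_le_tsum (fun w => by
        rw [abs_mul]
        calc |p w| * |q w| ≤ |p w| * 1 := mul_le_mul_of_nonneg_left (hq w) (abs_nonneg _)
          _ = |p w| := mul_one _) hs hp

end helpers

/-! ### The kernel `kpow` -/

section kernel
variable {Y : Type*} {P : Y → Y → ℝ}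

lemma kpow_zero_apply (x y : Y) : kpow P 0 x y = if x = y then 1 else 0 := rfl

lemma kpow_succ_apply (n : ℕ) (x y : Y) : kpow P (n+1) x y = ∑' z, P x z * kpow P n z y := rfl

lemma kpow_nonneg (hP0 : ∀ z w, 0 ≤ P z w) : ∀ (n : ℕ) (x y : Y), 0 ≤ kpow P n x y := by
  intro n
  induction n with
  | zero => intro x y; rw [kpow_zero_apply]; positivity
  | succ n ih => intro x y
                 exact tsum_nonneg fun z => mul_nonneg (hP0 x z) (ih z y)

lemma hasSum_kpow (hP0 : ∀ z w, 0 ≤ P z w) (hP1 : ∀ z, HasSum (P z) 1) :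
    ∀ (n : ℕ) (x : Y), HasSum (kpow P n x) 1 := by
  intro n
  induction n with
  | zero => intro x; exact hasSum_delta x
  | succ n ih => intro x
                 exact hasSum_bind (hP0 x) (hP1 x) (fun z w => kpow_nonneg hP0 n z w) ih

lemma kpow_succ_right (hP0 : ∀ z w, 0 ≤ P z w) (hP1 : ∀ z, HasSum (P z) 1) :
    ∀ (n : ℕ) (x y : Y), kpow P (n+1) x y = ∑' z, kpow P n x z * P z y := by
  have hPle : ∀ z w, P z w ≤ 1 := fun z w => le_of_hasSum_nonneg (hP0 z) (hP1 z) w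
  intro n
  induction n with
  | zero =>
      intro x y
      rw [kpow_succ_apply]
      rw [tsum_eq_single y (fun z hz => by
        show (P x z * if z = y then 1 else 0) = 0
        rw [if_neg hz, mul_zero])]
      rw [tsum_eq_single x (fun z hz => by
        show (if x = z then (1:ℝ) else 0) * P z y = 0
        rw [if_neg (Ne.symm hz), zero_mul])]
      show (P x y * if y = y then 1 else 0) = (if x = x then (1:ℝ) else 0) * P x y
      rw [if_pos rfl, if_pos rfl, mul_one, one_mul]
  | succ n ih =>
      intro x y
      rw [kpow_succ_apply]
      have e1 : ∀ z, P x z * kpow P (n+1) z y = ∑' w, P x z * (kpow P n z w * P w y) := by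
        intro z; rw [ih z y, tsum_mul_left]
      rw [tsum_congr e1]
      have h0 : ∀ z w, 0 ≤ P x z * (kpow P n z w * P w y) := fun z w =>
        mul_nonneg (hP0 x z) (mul_nonneg (kpow_nonneg hP0 n z w) (hP0 w y))
      have hsum_inner : ∀ z, Summable fun w => kpow P n z w * P w y := fun z =>
        summable_mul_right_le_one (fun w => kpow_nonneg hP0 n z w)
          (hasSum_kpow hP0 hP1 n z).summable (fun w => hP0 w y) (fun w => hPle w y)
      have h1 : ∀ z, Summable fun w => P x z * (kpow P n z w * P w y) := fun z =>
        (hsum_inner z).mul_left _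
      have hSle : ∀ z, ∑' w, kpow P n z w * P w y ≤ 1 := by
        intro z
        calc ∑' w, kpow P n z w * P w y ≤ ∑' w, kpow P n z w :=
              Summable.tsum_le_tsum (fun w => by
                calc kpow P n z w * P w y ≤ kpow P n z w * 1 :=
                      mul_le_mul_of_nonneg_left (hPle w y) (kpow_nonneg hP0 n z w)
                  _ = kpow P n z w := mul_one _)
                (hsum_inner z) (hasSum_kpow hP0 hP1 n z).summable
          _ = 1 := (hasSum_kpow hP0 hP1 n z).tsum_eq
      have h2 : Summable fun z => ∑' w, P x z * (kpow P n z w * P w y) := by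
        refine (summable_mul_right_le_one (fun z => hP0 x z) (hP1 x).summable
          (fun z => tsum_nonneg fun w => mul_nonneg (kpow_nonneg hP0 n z w) (hP0 w y))
          hSle).congr fun z => ?_
        rw [tsum_mul_left]
      rw [← tsum_comm_nonneg h0 h1 h2]
      refine tsum_congr fun w => ?_
      calc ∑' z, P x z * (kpow P n z w * P w y)
          = ∑' z, (P x z * kpow P n z w) * P w y := tsum_congr fun z => by ring
        _ = (∑' z, P x z * kpow P n z w) * P w y := tsum_mul_right
        _ = kpow P (n+1) x w * P w y := by rw [← kpow_succ_apply]

end kernel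

/-! ### Pushforward lemmas -/

section push

lemma pushMeas_nonneg {ν : G → ℝ} (h0 : ∀ g, 0 ≤ ν g) (x : X) (y : X) :
    0 ≤ pushMeas ν x y :=
  tsum_nonneg fun g => by by_cases h : g • x = y <;> simp [pushMeas, h, h0 g]

lemma hasSum_pushMeas {ν : G → ℝ} {c : ℝ} (hc : HasSum ν c) (x : X) :
    HasSum (pushMeas ν x) c := by
  have h := hc.tsum_fiberwise (fun g => g • x)
  have he : (fun y => ∑' g : (fun g : G => g • x) ⁻¹' {y}, ν g) = pushMeas ν x := by
    funext y
    rw [tsum_subtype]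
    exact tsum_congr fun g => by
      simp [Set.indicator_apply, Set.mem_preimage, Set.mem_singleton_iff, pushMeas]
  rwa [he] at h

lemma ite_tsum {α : Type*} {c : Prop} [Decidable c] (F : α → ℝ) :
    (if c then ∑' h, F h else 0) = ∑' h, if c then F h else 0 := by
  by_cases hc : c
  · simp [hc]
  · simp [hc]

lemma hasSum_translate {ν : G → ℝ} {c : ℝ} (hν : HasSum ν c) (h : G) :
    HasSum (fun g => ν (g * h⁻¹)) c :=
  (Equiv.mulRight h⁻¹).hasSum_iff.2 hν

lemma isProb_conv {μ ν : G → ℝ} (hν : IsProb ν) (hμ : IsProb μ) : IsProb (conv ν μ) := by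
  obtain ⟨hν0, hν1⟩ := hν
  obtain ⟨hμ0, hμ1⟩ := hμ
  constructor
  · intro g
    exact tsum_nonneg fun h => mul_nonneg (hν0 _) (hμ0 _)
  · have hb := hasSum_bind hμ0 hμ1 (K := fun h g => ν (g * h⁻¹))
      (fun h g => hν0 _) (fun h => hasSum_translate hν1 h)
    have he : (fun g => ∑' h, μ h * ν (g * h⁻¹)) = conv ν μ :=
      funext fun g => tsum_congr fun h => mul_comm _ _
    rwa [he] at hb

lemma isProb_convPow {μ : G → ℝ} (hμ : IsProb μ) (n : ℕ) : IsProb (convPow μ n) := by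
  induction n with
  | zero =>
      constructor
      · intro g; by_cases h : g = 1 <;> simp [convPow, deltaOne, h]
      · exact hasSum_ite_eq (1 : G) (1:ℝ)
  | succ n ih => exact isProb_conv ih hμ

lemma pushMeas_conv {μ ν : G → ℝ} (hν : IsProb ν) (hμ : IsProb μ) (x : X) (y : X) :
    pushMeas (conv ν μ) x y = ∑' z : X, transK μ x z * pushMeas ν z y := by
  obtain ⟨hν0, hν1⟩ := hν
  obtain ⟨hμ0, hμ1⟩ := hμ
  have hνle : ∀ g, ν g ≤ 1 := le_of_hasSum_nonneg hν0 hν1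
  have hconv := isProb_conv ⟨hν0, hν1⟩ ⟨hμ0, hμ1⟩
  set F : X → ℝ := fun z => pushMeas ν z y with hFdef
  have hF0 : ∀ z, 0 ≤ F z := fun z => pushMeas_nonneg hν0 z y
  have hFle : ∀ z, F z ≤ 1 := fun z =>
    le_of_hasSum_nonneg (fun y' => pushMeas_nonneg hν0 z y') (hasSum_pushMeas hν1 z) y
  -- step 1 : unfold and push the `if` inside
  have step1 : pushMeas (conv ν μ) x y
      = ∑' g, ∑' h, (if g • x = y then ν (g * h⁻¹) * μ h else 0) := by
    unfold pushMeas conv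
    exact tsum_congr fun g => ite_tsum _
  -- step 2 : swap the sums
  have h0 : ∀ g h, 0 ≤ (if g • x = y then ν (g * h⁻¹) * μ h else 0) := fun g h => by
    by_cases hc : g • x = y <;> simp [hc, mul_nonneg (hν0 _) (hμ0 _)]
  have h1 : ∀ g, Summable fun h => (if g • x = y then ν (g * h⁻¹) * μ h else 0) := by
    intro g
    refine hμ1.summable.of_nonneg_of_le (fun h => h0 g h) fun h => ?_
    by_cases hc : g • x = y
    · rw [if_pos hc]
      calc ν (g * h⁻¹) * μ h ≤ 1 * μ h :=
            mul_le_mul_of_nonneg_right (hνle _) (hμ0 h)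
        _ = μ h := one_mul _
    · rw [if_neg hc]; exact hμ0 h
  have h2 : Summable fun g => ∑' h, (if g • x = y then ν (g * h⁻¹) * μ h else 0) := by
    have he : (fun g => ∑' h, (if g • x = y then ν (g * h⁻¹) * μ h else 0))
        = fun g => if g • x = y then conv ν μ g else 0 :=
      funext fun g => (ite_tsum _).symm
    rw [he]
    refine hconv.2.summable.of_nonneg_of_le (fun g => ?_) (fun g => ?_)
    · by_cases hc : g • x = y <;> simp [hc, hconv.1 g]
    · by_cases hc : g • x = y <;> simp [hc, hconv.1 g]
  have step2 : pushMeas (conv ν μ) x y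
      = ∑' h, ∑' g, (if g • x = y then ν (g * h⁻¹) * μ h else 0) := by
    rw [step1, ← tsum_comm_nonneg h0 h1 h2]
  -- step 3 : translate the inner sum
  have step3 : ∀ h : G, (∑' g, (if g • x = y then ν (g * h⁻¹) * μ h else 0))
      = μ h * F (h • x) := by
    intro h
    have e := (Equiv.mulRight h).tsum_eq
      (fun g => if g • x = y then ν (g * h⁻¹) * μ h else 0)
    rw [← e]
    have e2 : ∀ k : G, (if (Equiv.mulRight h k) • x = y
          then ν ((Equiv.mulRight h k) * h⁻¹) * μ h else 0)
        = (if k • (h • x) = y then ν k else 0) * μ h := by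
      intro k
      have hk1 : (Equiv.mulRight h k) • x = k • (h • x) := by
        simp [Equiv.mulRight, mul_smul]
      have hk2 : (Equiv.mulRight h k) * h⁻¹ = k := by
        simp [Equiv.mulRight]
      rw [hk1, hk2]
      by_cases hc : k • (h • x) = y
      · rw [if_pos hc, if_pos hc]
      · rw [if_neg hc, if_neg hc, zero_mul]
    rw [tsum_congr e2, tsum_mul_right]
    rw [mul_comm]
    rfl
  -- step 4 : regroup by the image point
  have step4 : (∑' h : G, μ h * F (h • x)) = ∑' z : X, transK μ x z * F z := by
    have h0' : ∀ (h : G) (z : X), 0 ≤ (if h • x = z then μ h * F z else 0) := fun h z => by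
      by_cases hc : h • x = z <;> simp [hc, mul_nonneg (hμ0 h) (hF0 z)]
    have h1' : ∀ h : G, Summable fun z : X => (if h • x = z then μ h * F z else 0) :=
      fun h => summable_delta_mul (h • x) _
    have hval : ∀ h : G, (∑' z : X, (if h • x = z then μ h * F z else 0)) = μ h * F (h • x) :=
      fun h => tsum_delta_mul (h • x) _
    have h2' : Summable fun h : G => ∑' z : X, (if h • x = z then μ h * F z else 0) := by
      refine hμ1.summable.of_nonneg_of_le
        (fun h => ?_) (fun h => ?_)
      · rw [hval h]; exact mul_nonneg (hμ0 h) (hF0 _)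
      · rw [hval h]
        calc μ h * F (h • x) ≤ μ h * 1 := mul_le_mul_of_nonneg_left (hFle _) (hμ0 h)
          _ = μ h := mul_one _
    calc (∑' h : G, μ h * F (h • x))
        = ∑' h : G, ∑' z : X, (if h • x = z then μ h * F z else 0) :=
          tsum_congr fun h => (hval h).symm
      _ = ∑' z : X, ∑' h : G, (if h • x = z then μ h * F z else 0) :=
          (tsum_comm_nonneg h0' h1' h2').symm
      _ = ∑' z : X, transK μ x z * F z := by
          refine tsum_congr fun z => ?_
          have : (∑' h : G, (if h • x = z then μ h * F z else 0))
              = (∑' h : G, (if h • x = z then μ h else 0)) * F z := by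
            rw [← tsum_mul_right]
            refine tsum_congr fun h => ?_
            by_cases hc : h • x = z
            · rw [if_pos hc, if_pos hc]
            · rw [if_neg hc, if_neg hc, zero_mul]
          rw [this]; rfl
  rw [step2, tsum_congr step3, step4]

lemma pushMeas_convPow {μ : G → ℝ} (hμ : IsProb μ) :
    ∀ (n : ℕ) (x y : X), pushMeas (convPow μ n) x y = kpow (transK μ) n x y := by
  intro n
  induction n with
  | zero =>
      intro x y
      show pushMeas deltaOne x y = _
      unfold pushMeas deltaOne
      have he : ∀ g : G, (if g • x = y then (if g = 1 then (1:ℝ) else 0) else 0)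
          = if g = 1 then (if x = y then (1:ℝ) else 0) else 0 := by
        intro g
        by_cases hg : g = 1
        · subst hg; simp [one_smul]
        · simp [hg]
      rw [tsum_congr he, tsum_ite_eq (1 : G) (fun _ => if x = y then (1:ℝ) else 0)]
      rfl
  | succ n ih =>
      intro x y
      show pushMeas (conv (convPow μ n) μ) x y = _
      rw [pushMeas_conv (isProb_convPow hμ n) hμ x y]
      rw [tsum_congr fun z => by rw [ih z y]]
      rw [kpow_succ_apply]

end push

lemma choose_mono_part (n k : ℕ) (hk : k < (n+1)/2) : n.choose k ≤ n.choose (k+1) := by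
  rcases lt_or_ge k (n/2) with h|h
  · exact Nat.choose_le_succ_of_lt_half_left h
  · have hn : n = 2*k+1 := by omega
    subst hn
    have hs := Nat.choose_symm (show k+1 ≤ 2*k+1 by omega)
    have he : (2*k+1) - (k+1) = k := by omega
    rw [he] at hs
    exact le_of_eq hs

lemma choose_anti_part (n k : ℕ) (hk : (n+1)/2 ≤ k) : n.choose (k+1) ≤ n.choose k := by
  rcases lt_or_ge k n with h|h
  · have h1 : k+1 ≤ n := h
    have e1 : n.choose (k+1) = n.choose (n - (k+1)) := (Nat.choose_symm h1).symm
    have e2 : n.choose k = n.choose (n - k) := (Nat.choose_symm (le_of_lt h)).symm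
    rw [e1, e2]
    have he : n - k = (n - (k+1)) + 1 := by omega
    rw [he]
    exact choose_mono_part n (n - (k+1)) (by omega)
  · have h0 : n.choose (k+1) = 0 := Nat.choose_eq_zero_of_lt (by omega)
    rw [h0]
    exact Nat.zero_le _

lemma choose_abs_sum (n : ℕ) :
    ∑ k ∈ Finset.range (n+2), |((n+1).choose k : ℝ) - 2 * (n.choose k : ℝ)|
      = 2 * (n.choose ((n+1)/2) : ℝ) := by
  set m := (n+1)/2 with hm
  have hm1 : m ≤ n+1 := by omega
  rw [Finset.sum_range_succ' (fun k => |((n+1).choose k : ℝ) - 2 * (n.choose k : ℝ)|) (n+1)]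
  have h0 : |((n+1).choose 0 : ℝ) - 2 * (n.choose 0 : ℝ)| = 1 := by norm_num
  have hterm : ∀ k, |((n+1).choose (k+1) : ℝ) - 2 * (n.choose (k+1) : ℝ)|
      = |(n.choose (k+1) : ℝ) - (n.choose k : ℝ)| := by
    intro k
    have hc : ((n+1).choose (k+1) : ℝ) = (n.choose k : ℝ) + (n.choose (k+1) : ℝ) := by
      exact_mod_cast Nat.choose_succ_succ n k
    rw [hc, abs_sub_comm]
    congr 1
    ring
  rw [Finset.sum_congr rfl (fun k _ => hterm k), h0]
  have key : ∑ k ∈ Finset.range (n+1), |(n.choose (k+1) : ℝ) - (n.choose k : ℝ)|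
      = 2 * (n.choose m : ℝ) - 1 := by
    have hsplit : ∑ k ∈ Finset.range (n+1), |(n.choose (k+1) : ℝ) - (n.choose k : ℝ)|
        = (∑ k ∈ Finset.range m, |(n.choose (k+1) : ℝ) - (n.choose k : ℝ)|)
          + ∑ k ∈ Finset.Ico m (n+1), |(n.choose (k+1) : ℝ) - (n.choose k : ℝ)| := by
      rw [Finset.range_eq_Ico, ← Finset.sum_Ico_consecutive _ (Nat.zero_le m) hm1,
        ← Finset.range_eq_Ico]
    rw [hsplit]
    have hup : ∑ k ∈ Finset.range m, |(n.choose (k+1) : ℝ) - (n.choose k : ℝ)|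
        = (n.choose m : ℝ) - (n.choose 0 : ℝ) := by
      have hc : ∀ k ∈ Finset.range m, |(n.choose (k+1) : ℝ) - (n.choose k : ℝ)|
          = (n.choose (k+1) : ℝ) - (n.choose k : ℝ) := by
        intro k hk
        exact abs_of_nonneg (sub_nonneg.mpr (by
          exact_mod_cast choose_mono_part n k (Finset.mem_range.mp hk)))
      rw [Finset.sum_congr rfl hc, Finset.sum_range_sub (fun k => (n.choose k : ℝ))]
    have hdown : ∑ k ∈ Finset.Ico m (n+1), |(n.choose (k+1) : ℝ) - (n.choose k : ℝ)|
        = (n.choose m : ℝ) - (n.choose (n+1) : ℝ) := by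
      rw [Finset.sum_Ico_eq_sum_range]
      have hc : ∀ i ∈ Finset.range (n+1-m), |(n.choose (m+i+1) : ℝ) - (n.choose (m+i) : ℝ)|
          = (n.choose (m+i) : ℝ) - (n.choose (m+i+1) : ℝ) := by
        intro i _
        rw [abs_sub_comm]
        exact abs_of_nonneg (sub_nonneg.mpr (by
          exact_mod_cast choose_anti_part n (m+i) (by omega)))
      rw [Finset.sum_congr rfl hc]
      have htel := Finset.sum_range_sub' (fun i => (n.choose (m+i) : ℝ)) (n+1-m)
      have he : m + (n+1-m) = n+1 := by omega
      rw [he] at htel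
      rw [show (∑ i ∈ Finset.range (n+1-m),
            ((n.choose (m+i) : ℝ) - (n.choose (m+i+1) : ℝ)))
          = ∑ i ∈ Finset.range (n+1-m),
            ((n.choose (m+i) : ℝ) - (n.choose (m+(i+1)) : ℝ)) from
        Finset.sum_congr rfl fun i _ => by rw [Nat.add_assoc]]
      rw [htel]
      simp
    rw [hup, hdown]
    have hz : (n.choose (n+1) : ℝ) = 0 := by
      rw [Nat.choose_succ_self]; norm_num
    rw [hz]
    simp [Nat.choose_zero_right]
    ring
  rw [key]
  ring


/-! ### Laziness: the auxiliary kernel and rows -/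

def lazQ {Y : Type*} (P : Y → Y → ℝ) : Y → Y → ℝ :=
  fun w z => 2 * P w z - (if w = z then 1 else 0)

def lazR {Y : Type*} (P : Y → Y → ℝ) (x : Y) : ℕ → Y → ℝ
  | 0 => fun z => if x = z then 1 else 0
  | k + 1 => fun z => ∑' w, lazR P x k w * lazQ P w z

section lazy
variable {Y : Type*} {P : Y → Y → ℝ}

lemma lazQ_nonneg (hP0 : ∀ z w, 0 ≤ P z w) (hl : ∀ z, (1:ℝ)/2 ≤ P z z) (w z : Y) :
    0 ≤ lazQ P w z := by
  unfold lazQ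
  by_cases h : w = z
  · subst h; have := hl w; simp; linarith
  · rw [if_neg h]; have := hP0 w z; linarith

lemma hasSum_lazQ (hP1 : ∀ z, HasSum (P z) 1) (w : Y) : HasSum (lazQ P w) 1 := by
  have h1 : HasSum (fun z => 2 * P w z) 2 := by
    simpa using (hP1 w).mul_left 2
  have h2 : HasSum (fun z => if w = z then (1:ℝ) else 0) 1 := hasSum_delta w
  have h3 := h1.sub h2
  norm_num at h3
  exact h3

lemma lazR_nonneg (hP0 : ∀ z w, 0 ≤ P z w) (hl : ∀ z, (1:ℝ)/2 ≤ P z z) (x : Y) :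
    ∀ (k : ℕ) (z : Y), 0 ≤ lazR P x k z := by
  intro k
  induction k with
  | zero => intro z; unfold lazR; positivity
  | succ k ih => intro z
                 exact tsum_nonneg fun w => mul_nonneg (ih w) (lazQ_nonneg hP0 hl w z)

lemma hasSum_lazR (hP0 : ∀ z w, 0 ≤ P z w) (hP1 : ∀ z, HasSum (P z) 1)
    (hl : ∀ z, (1:ℝ)/2 ≤ P z z) (x : Y) :
    ∀ k : ℕ, HasSum (lazR P x k) 1 := by
  intro k
  induction k with
  | zero => exact hasSum_delta x
  | succ k ih =>
      exact hasSum_bind (lazR_nonneg hP0 hl x k) ih (fun w z => lazQ_nonneg hP0 hl w z)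
        (fun w => hasSum_lazQ hP1 w)

lemma lazR_succ_apply (x : Y) (k : ℕ) (z : Y) :
    lazR P x (k+1) z = ∑' w, lazR P x k w * lazQ P w z := rfl

lemma lazR_mul_P (hP0 : ∀ z w, 0 ≤ P z w) (hP1 : ∀ z, HasSum (P z) 1)
    (hl : ∀ z, (1:ℝ)/2 ≤ P z z) (x : Y) (k : ℕ) (z : Y) :
    ∑' w, lazR P x k w * P w z = (lazR P x k z + lazR P x (k+1) z) / 2 := by
  have hr0 := lazR_nonneg hP0 hl x k
  have hr1 := hasSum_lazR hP0 hP1 hl x k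
  have hPsplit : ∀ w, lazR P x k w * P w z
      = ((if w = z then lazR P x k w else 0) + lazR P x k w * lazQ P w z) * 2⁻¹ := by
    intro w
    unfold lazQ
    by_cases hw : w = z
    · rw [if_pos hw, if_pos hw]; ring
    · rw [if_neg hw, if_neg hw]; ring
  rw [tsum_congr hPsplit]
  have hs1 : Summable fun w => (if w = z then lazR P x k w else 0) :=
    (hasSum_ite_eq z (lazR P x k z)).summable.congr fun w => by
      by_cases hw : w = z
      · subst hw; rfl
      · rw [if_neg hw, if_neg hw]
  have hs2 : Summable fun w => lazR P x k w * lazQ P w z := by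
    refine (hr1.summable.mul_right 2).of_nonneg_of_le
      (fun w => mul_nonneg (hr0 w) (lazQ_nonneg hP0 hl w z)) (fun w => ?_)
    have hQle : lazQ P w z ≤ 2 := by
      unfold lazQ
      have h1 := le_of_hasSum_nonneg (hP0 w) (hP1 w) z
      by_cases hw : w = z
      · rw [if_pos hw]; linarith
      · rw [if_neg hw]; linarith
    exact mul_le_mul_of_nonneg_left hQle (hr0 w)
  rw [tsum_mul_right, Summable.tsum_add hs1 hs2]
  rw [tsum_eq_single z (fun w hw => if_neg hw), if_pos rfl]
  rw [← lazR_succ_apply]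
  ring

lemma pascal_sum (n : ℕ) (a : ℕ → ℝ) :
    (∑ k ∈ Finset.range (n+1), (n.choose k : ℝ) * a k)
      + ∑ k ∈ Finset.range (n+1), (n.choose k : ℝ) * a (k+1)
      = ∑ k ∈ Finset.range (n+2), ((n+1).choose k : ℝ) * a k := by
  rw [Finset.sum_range_succ' (fun k => ((n+1).choose k : ℝ) * a k) (n+1)]
  rw [Finset.sum_range_succ' (fun k => ((n).choose k : ℝ) * a k) n]
  have h2 : ∀ k, (((n+1).choose (k+1) : ℝ)) * a (k+1)
      = (n.choose k : ℝ) * a (k+1) + (n.choose (k+1) : ℝ) * a (k+1) := by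
    intro k
    have hc : ((n+1).choose (k+1) : ℝ) = (n.choose k : ℝ) + (n.choose (k+1) : ℝ) := by
      exact_mod_cast Nat.choose_succ_succ n k
    rw [hc, add_mul]
  rw [Finset.sum_congr rfl (fun k _ => h2 k), Finset.sum_add_distrib]
  have h3 : ∑ k ∈ Finset.range (n+1), (n.choose (k+1) : ℝ) * a (k+1)
      = ∑ k ∈ Finset.range n, (n.choose (k+1) : ℝ) * a (k+1) := by
    rw [Finset.sum_range_succ]
    simp [Nat.choose_succ_self]
  rw [h3]
  simp [Nat.choose_zero_right]
  ring

/-- Binomial representation of the powers of a lazy kernel. -/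
lemma kpow_eq_lazR (hP0 : ∀ z w, 0 ≤ P z w) (hP1 : ∀ z, HasSum (P z) 1)
    (hl : ∀ z, (1:ℝ)/2 ≤ P z z) (x : Y) :
    ∀ (n : ℕ) (z : Y), kpow P n x z
      = (2:ℝ)⁻¹ ^ n * ∑ k ∈ Finset.range (n+1), (n.choose k : ℝ) * lazR P x k z := by
  have hPle : ∀ z w, P z w ≤ 1 := fun z w => le_of_hasSum_nonneg (hP0 z) (hP1 z) w
  intro n
  induction n with
  | zero =>
      intro z
      show (if x = z then (1:ℝ) else 0) = _
      simp [lazR]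
  | succ n ih =>
      intro z
      rw [kpow_succ_right hP0 hP1 n x z]
      have hsummable : ∀ k : ℕ, Summable fun w => (n.choose k : ℝ) * (lazR P x k w * P w z) :=
        fun k => (summable_mul_right_le_one (lazR_nonneg hP0 hl x k)
          (hasSum_lazR hP0 hP1 hl x k).summable (fun w => hP0 w z)
          (fun w => hPle w z)).mul_left _
      calc ∑' w, kpow P n x w * P w z
          = ∑' w, (2:ℝ)⁻¹^n
              * ∑ k ∈ Finset.range (n+1), (n.choose k : ℝ) * (lazR P x k w * P w z) := by
            refine tsum_congr fun w => ?_
            rw [ih w, mul_assoc, Finset.sum_mul]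
            congr 1
            · exact Finset.sum_congr rfl fun k _ => mul_assoc _ _ _
        _ = (2:ℝ)⁻¹^n * ∑' w, ∑ k ∈ Finset.range (n+1),
              (n.choose k : ℝ) * (lazR P x k w * P w z) := tsum_mul_left
        _ = (2:ℝ)⁻¹^n * ∑ k ∈ Finset.range (n+1), ∑' w,
              (n.choose k : ℝ) * (lazR P x k w * P w z) := by
            rw [Summable.tsum_finsetSum (fun k _ => hsummable k)]
        _ = (2:ℝ)⁻¹^n * ∑ k ∈ Finset.range (n+1),
              (n.choose k : ℝ) * ((lazR P x k z + lazR P x (k+1) z) / 2) := by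
            congr 1
            refine Finset.sum_congr rfl fun k _ => ?_
            rw [tsum_mul_left, lazR_mul_P hP0 hP1 hl x k z]
        _ = (2:ℝ)⁻¹ ^ (n+1) * ∑ k ∈ Finset.range (n+2),
              ((n+1).choose k : ℝ) * lazR P x k z := by
            have hs : ∑ k ∈ Finset.range (n+1),
                (n.choose k : ℝ) * ((lazR P x k z + lazR P x (k+1) z) / 2)
                = ((∑ k ∈ Finset.range (n+1), (n.choose k : ℝ) * lazR P x k z)
                  + ∑ k ∈ Finset.range (n+1), (n.choose k : ℝ) * lazR P x (k+1) z) * 2⁻¹ := by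
              rw [← Finset.sum_add_distrib, Finset.sum_mul]
              exact Finset.sum_congr rfl fun k _ => by ring
            rw [hs, pascal_sum n (fun k => lazR P x k z), pow_succ]
            ring

/-- The ℓ¹ bound for consecutive powers of a lazy kernel. -/
lemma dist_kpow_succ (hP0 : ∀ z w, 0 ≤ P z w) (hP1 : ∀ z, HasSum (P z) 1)
    (hl : ∀ z, (1:ℝ)/2 ≤ P z z) (x : Y) (n : ℕ) :
    ∑' w, |kpow P (n+1) x w - kpow P n x w|
      ≤ (2:ℝ)⁻¹ ^ n * (n.choose ((n+1)/2) : ℝ) := by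
  have hr0 := lazR_nonneg hP0 hl x
  have hr1 := hasSum_lazR hP0 hP1 hl x
  set coef : ℕ → ℝ := fun k => ((n+1).choose k : ℝ) - 2 * (n.choose k : ℝ) with hcoef
  have hpt : ∀ w, kpow P (n+1) x w - kpow P n x w
      = (2:ℝ)⁻¹^(n+1) * ∑ k ∈ Finset.range (n+2), coef k * lazR P x k w := by
    intro w
    rw [kpow_eq_lazR hP0 hP1 hl x (n+1) w, kpow_eq_lazR hP0 hP1 hl x n w]
    have hext : ∑ k ∈ Finset.range (n+1), (n.choose k : ℝ) * lazR P x k w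
        = ∑ k ∈ Finset.range (n+2), (n.choose k : ℝ) * lazR P x k w := by
      rw [Finset.sum_range_succ (fun k => (n.choose k : ℝ) * lazR P x k w) (n+1)]
      simp [Nat.choose_succ_self]
    rw [hext]
    have expand : ∑ k ∈ Finset.range (n+2), coef k * lazR P x k w
        = (∑ k ∈ Finset.range (n+2), ((n+1).choose k : ℝ) * lazR P x k w)
          - 2 * ∑ k ∈ Finset.range (n+2), (n.choose k : ℝ) * lazR P x k w := by
      rw [Finset.mul_sum, ← Finset.sum_sub_distrib]
      exact Finset.sum_congr rfl fun k _ => by rw [hcoef]; ring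
    rw [expand, pow_succ]
    ring
  have habs : ∀ w, |kpow P (n+1) x w - kpow P n x w|
      ≤ (2:ℝ)⁻¹^(n+1) * ∑ k ∈ Finset.range (n+2), |coef k| * lazR P x k w := by
    intro w
    rw [hpt w, abs_mul, abs_of_nonneg (by positivity : (0:ℝ) ≤ (2:ℝ)⁻¹^(n+1))]
    refine mul_le_mul_of_nonneg_left ?_ (by positivity)
    calc |∑ k ∈ Finset.range (n+2), coef k * lazR P x k w|
        ≤ ∑ k ∈ Finset.range (n+2), |coef k * lazR P x k w| :=
          Finset.abs_sum_le_sum_abs _ _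
      _ = ∑ k ∈ Finset.range (n+2), |coef k| * lazR P x k w :=
          Finset.sum_congr rfl fun k _ => by rw [abs_mul, abs_of_nonneg (hr0 k w)]
  have hRsum : HasSum
      (fun w => (2:ℝ)⁻¹^(n+1) * ∑ k ∈ Finset.range (n+2), |coef k| * lazR P x k w)
      ((2:ℝ)⁻¹^(n+1) * ∑ k ∈ Finset.range (n+2), |coef k|) := by
    have h1 : HasSum (fun w => ∑ k ∈ Finset.range (n+2), |coef k| * lazR P x k w)
        (∑ k ∈ Finset.range (n+2), |coef k|) := by
      have h2 : ∀ k ∈ Finset.range (n+2),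
          HasSum (fun w => |coef k| * lazR P x k w) (|coef k|) := by
        intro k _
        simpa using (hr1 k).mul_left (|coef k|)
      exact hasSum_sum h2
    exact h1.mul_left _
  have hLsum : Summable fun w => |kpow P (n+1) x w - kpow P n x w| :=
    (((hasSum_kpow hP0 hP1 (n+1) x).summable).sub
      (hasSum_kpow hP0 hP1 n x).summable).abs
  calc ∑' w, |kpow P (n+1) x w - kpow P n x w|
      ≤ ∑' w, (2:ℝ)⁻¹^(n+1) * ∑ k ∈ Finset.range (n+2), |coef k| * lazR P x k w :=
        Summable.tsum_le_tsum habs hLsum hRsum.summable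
    _ = (2:ℝ)⁻¹^(n+1) * ∑ k ∈ Finset.range (n+2), |coef k| := hRsum.tsum_eq
    _ = (2:ℝ)⁻¹^(n+1) * (2 * (n.choose ((n+1)/2) : ℝ)) := by
        rw [show (∑ k ∈ Finset.range (n+2), |coef k|)
            = ∑ k ∈ Finset.range (n+2), |((n+1).choose k : ℝ) - 2 * (n.choose k : ℝ)| from
          Finset.sum_congr rfl fun k _ => rfl]
        rw [choose_abs_sum n]
    _ = (2:ℝ)⁻¹ ^ n * (n.choose ((n+1)/2) : ℝ) := by
        rw [pow_succ]
        ring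

end lazy

/-! ### Binomial coefficient estimates -/

section binom

def cbound (n : ℕ) : ℝ := (2:ℝ)⁻¹ ^ n * (n.choose ((n+1)/2) : ℝ)

lemma cbound_nonneg (n : ℕ) : 0 ≤ cbound n := by
  unfold cbound; positivity

def prodB (m : ℕ) : ℝ := ∏ j ∈ Finset.range m, (1 - (2*(j:ℝ)+2)⁻¹)

lemma factor_nonneg (j : ℕ) : 0 ≤ 1 - (2*(j:ℝ)+2)⁻¹ := by
  have h0 : (0:ℝ) < 2*(j:ℝ)+2 := by positivity
  have h1 : (2*(j:ℝ)+2)⁻¹ ≤ 1 := by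
    rw [inv_le_one_iff₀]
    right
    nlinarith [Nat.cast_nonneg (α := ℝ) j]
  linarith

lemma prodB_nonneg (m : ℕ) : 0 ≤ prodB m :=
  Finset.prod_nonneg fun j _ => factor_nonneg j

lemma prodB_succ (m : ℕ) : prodB (m+1) = prodB m * (1 - (2*(m:ℝ)+2)⁻¹) :=
  Finset.prod_range_succ _ _

lemma cbound_two_mul (m : ℕ) :
    cbound (2*m) = (2:ℝ)⁻¹ ^ (2*m) * (Nat.centralBinom m : ℝ) := by
  unfold cbound
  have hidx : (2*m+1)/2 = m := by omega
  rw [hidx]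
  rfl

lemma cbound_even_eq : ∀ m : ℕ, cbound (2*m) = prodB m := by
  intro m
  induction m with
  | zero => unfold cbound prodB; norm_num
  | succ m ih =>
      have hcast : ((m:ℝ)+1) * (Nat.centralBinom (m+1) : ℝ)
          = 2*(2*(m:ℝ)+1) * (Nat.centralBinom m : ℝ) := by
        exact_mod_cast Nat.succ_mul_centralBinom_succ m
      have hm0 : ((m:ℝ)+1) ≠ 0 := by positivity
      have h2m2 : (2*(m:ℝ)+2) ≠ 0 := by positivity
      have hp : (2:ℝ)⁻¹^(2*(m+1)) = (2:ℝ)⁻¹^(2*m) * 4⁻¹ := by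
        rw [show 2*(m+1) = 2*m + 2 by ring, pow_add]
        norm_num
      rw [show ((m:ℕ)+1 : ℕ) = m+1 from rfl, cbound_two_mul (m+1), prodB_succ, ← ih,
        cbound_two_mul m, hp]
      have key : (4:ℝ)⁻¹ * (Nat.centralBinom (m+1) : ℝ)
          = (Nat.centralBinom m : ℝ) * (1 - (2*(m:ℝ)+2)⁻¹) := by
        have hcm : ((m+1 : ℕ):ℝ) = (m:ℝ)+1 := by push_cast; ring
        field_simp
        rw [hcm] at *
        linear_combination 2 * hcast
      calc (2:ℝ)⁻¹^(2*m) * 4⁻¹ * (Nat.centralBinom (m+1) : ℝ)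
          = (2:ℝ)⁻¹^(2*m) * ((4:ℝ)⁻¹ * (Nat.centralBinom (m+1) : ℝ)) := by ring
        _ = (2:ℝ)⁻¹^(2*m) * ((Nat.centralBinom m : ℝ) * (1 - (2*(m:ℝ)+2)⁻¹)) := by rw [key]
        _ = (2:ℝ)⁻¹^(2*m) * (Nat.centralBinom m : ℝ) * (1 - (2*(m:ℝ)+2)⁻¹) := by ring

lemma cbound_odd_eq (m : ℕ) : cbound (2*m+1) = prodB (m+1) := by
  rw [← cbound_even_eq (m+1)]
  unfold cbound
  have hidx1 : (2*m+1+1)/2 = m+1 := by omega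
  have hidx2 : (2*(m+1)+1)/2 = m+1 := by omega
  rw [hidx1, hidx2]
  have hcc : (2*(m+1)).choose (m+1) = (2*m+1).choose m + (2*m+1).choose (m+1) := by
    rw [show 2*(m+1) = (2*m+1)+1 by ring]
    exact Nat.choose_succ_succ (2*m+1) m
  have hsym : (2*m+1).choose m = (2*m+1).choose (m+1) := by
    have hs := Nat.choose_symm (show m+1 ≤ 2*m+1 by omega)
    have he : 2*m+1-(m+1) = m := by omega
    rw [he] at hs
    exact hs
  have hC : ((2*(m+1)).choose (m+1) : ℝ) = 2 * ((2*m+1).choose (m+1) : ℝ) := by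
    rw [hcc, hsym]
    push_cast
    ring
  rw [hC]
  have hp : (2:ℝ)⁻¹^(2*(m+1)) = (2:ℝ)⁻¹^(2*m+1) * 2⁻¹ := by
    rw [show 2*(m+1) = (2*m+1) + 1 by ring, pow_succ]
  rw [hp]
  ring

lemma cbound_le_prodB (n : ℕ) : cbound n ≤ prodB (n / 2) := by
  rcases Nat.even_or_odd n with ⟨m, hm⟩ | ⟨m, hm⟩
  · have h1 : n = 2*m := by omega
    subst h1
    have h3 : 2*m/2 = m := by omega
    rw [h3, cbound_even_eq m]
  · have h1 : n = 2*m+1 := by omega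
    subst h1
    have h3 : (2*m+1)/2 = m := by omega
    rw [h3, cbound_odd_eq m, prodB_succ]
    have hf : 1 - (2*(m:ℝ)+2)⁻¹ ≤ 1 := by
      have h3 : 0 ≤ (2*(m:ℝ)+2)⁻¹ := by positivity
      linarith
    calc prodB m * (1 - (2*(m:ℝ)+2)⁻¹) ≤ prodB m * 1 :=
          mul_le_mul_of_nonneg_left hf (prodB_nonneg m)
      _ = prodB m := mul_one _

lemma prodB_tendsto_zero : Tendsto prodB atTop (nhds 0) := by
  have hbound : ∀ m, prodB m
      ≤ Real.exp (-(2⁻¹ * ∑ j ∈ Finset.range m, ((j:ℝ)+1)⁻¹)) := by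
    intro m
    have h1 : prodB m ≤ ∏ j ∈ Finset.range m, Real.exp (-(2*(j:ℝ)+2)⁻¹) := by
      refine Finset.prod_le_prod (fun j _ => factor_nonneg j) (fun j _ => ?_)
      have h2 := Real.add_one_le_exp (-(2*(j:ℝ)+2)⁻¹)
      linarith
    rw [← Real.exp_sum] at h1
    have h2 : ∑ j ∈ Finset.range m, -((2*(j:ℝ)+2)⁻¹)
        = -(2⁻¹ * ∑ j ∈ Finset.range m, ((j:ℝ)+1)⁻¹) := by
      rw [Finset.mul_sum, ← Finset.sum_neg_distrib]
      refine Finset.sum_congr rfl fun j _ => ?_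
      have hj : (2*(j:ℝ)+2) = 2 * ((j:ℝ)+1) := by ring
      rw [hj, mul_inv]
    rwa [h2] at h1
  have hH : Tendsto (fun m => ∑ j ∈ Finset.range m, ((j:ℝ)+1)⁻¹) atTop atTop := by
    have h3 := Real.tendsto_sum_range_one_div_nat_succ_atTop
    refine h3.congr fun m => Finset.sum_congr rfl fun j _ => ?_
    rw [one_div]
  have hexp : Tendsto (fun m => Real.exp (-(2⁻¹ * ∑ j ∈ Finset.range m, ((j:ℝ)+1)⁻¹)))
      atTop (nhds 0) := by
    apply Real.tendsto_exp_atBot.comp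
    exact tendsto_neg_atTop_atBot.comp (hH.const_mul_atTop (by norm_num : (0:ℝ) < 2⁻¹))
  exact squeeze_zero prodB_nonneg hbound hexp

lemma cbound_tendsto_zero : Tendsto cbound atTop (nhds 0) := by
  have hdiv : Tendsto (fun n : ℕ => n / 2) atTop atTop := by
    apply Filter.tendsto_atTop_atTop.mpr
    intro b
    exact ⟨2*b, fun n hn => by omega⟩
  exact squeeze_zero cbound_nonneg cbound_le_prodB (prodB_tendsto_zero.comp hdiv)

end binom

/-! ### Statement -/

theorem stmt15 {G : Type*} [Group G] [Countable G] {X : Type*} [MulAction G X] [Countable X]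
    (μ : G → ℝ) (hμ : IsProb μ)
    (hirr : ∀ x y : X, ∃ n : ℕ, 0 < kpow (transK μ) n x y)
    (hlazy : ∀ x : X, (1 : ℝ) / 2 ≤ transK μ x x)
    (hLiou : ∀ h : X → ℝ, BoundedFn h → IsHarmonic (transK μ) h → ∀ x y : X, h x = h y) :
    ∀ x y : X,
      Filter.Tendsto
        (fun n => dist1 (pushMeas (convPow μ n) x) (pushMeas (convPow μ n) y))
        Filter.atTop (nhds 0) := by
  intro x y
  obtain ⟨hμ0, hμ1⟩ := hμ
  set P : X → X → ℝ := transK μ with hPdef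
  have hP0 : ∀ z w, 0 ≤ P z w := fun z w => pushMeas_nonneg hμ0 z w
  have hP1 : ∀ z, HasSum (P z) 1 := fun z => hasSum_pushMeas hμ1 z
  have hl : ∀ z, (1:ℝ)/2 ≤ P z z := hlazy
  have hK0 : ∀ (n : ℕ) (z w : X), 0 ≤ kpow P n z w := fun n => kpow_nonneg hP0 n
  have hKsum : ∀ (n : ℕ) (z : X), Summable (kpow P n z) :=
    fun n z => (hasSum_kpow hP0 hP1 n z).summable
  have hrw : (fun n => dist1 (pushMeas (convPow μ n) x) (pushMeas (convPow μ n) y))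
      = fun n => ∑' w, |kpow P n x w - kpow P n y w| := by
    funext n
    unfold dist1
    exact tsum_congr fun w => by
      rw [pushMeas_convPow ⟨hμ0, hμ1⟩ n x w, pushMeas_convPow ⟨hμ0, hμ1⟩ n y w]
  rw [hrw]
  set D : ℕ → ℝ := fun n => ∑' w, |kpow P n x w - kpow P n y w| with hD
  have hD_nonneg : ∀ n, 0 ≤ D n := fun n => tsum_nonneg fun w => abs_nonneg _
  have hDsum : ∀ n, Summable fun w => |kpow P n x w - kpow P n y w| :=
    fun n => ((hKsum n x).sub (hKsum n y)).abs
  have hD_anti : Antitone D := by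
    refine antitone_nat_of_succ_le fun n => ?_
    have e1 : ∀ (z w : X), kpow P (n+1) z w = ∑' u, kpow P n z u * P u w :=
      fun z w => kpow_succ_right hP0 hP1 n z w
    calc D (n+1)
        = ∑' w, |(∑' u, kpow P n x u * P u w) - ∑' u, kpow P n y u * P u w| := by
          rw [hD]
          exact tsum_congr fun w => by rw [e1 x w, e1 y w]
      _ ≤ ∑' u, |kpow P n x u - kpow P n y u| :=
          dist1_bind_le (hKsum n x) (hKsum n y) (fun u w => hP0 u w) hP1
      _ = D n := rfl
  have hBdd : BddBelow (Set.range D) := ⟨0, fun v hv => by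
    obtain ⟨n, hn⟩ := hv
    exact hn ▸ hD_nonneg n⟩
  have hten : Tendsto D atTop (nhds (⨅ n, D n)) := tendsto_atTop_ciInf hD_anti hBdd
  set L : ℝ := ⨅ n, D n with hL
  have hL0 : 0 ≤ L := le_ciInf hD_nonneg
  rcases eq_or_lt_of_le hL0 with h|hpos
  · rw [← h] at hten
    exact hten
  exfalso
  classical
  set f : ℕ → X → ℝ :=
    fun n w => if 0 ≤ kpow P n x w - kpow P n y w then 1 else -1 with hf
  have hf_abs : ∀ n w, |f n w| ≤ 1 := fun n w => by
    rw [hf]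
    by_cases hc : 0 ≤ kpow P n x w - kpow P n y w <;> simp [hc]
  have hKabs : ∀ (n : ℕ) (z : X), Summable fun w => |kpow P n z w| :=
    fun n z => (hKsum n z).congr fun w => (abs_of_nonneg (hK0 n z w)).symm
  have hsg : ∀ (n : ℕ) (z : X), Summable fun w => kpow P n z w * f n w :=
    fun n z => summable_mul_bounded (hKabs n z) (hf_abs n)
  set g : ℕ → X → ℝ := fun n z => ∑' w, kpow P n z w * f n w with hg
  have hg_bdd : ∀ n z, |g n z| ≤ 1 := by
    intro n z
    rw [hg]
    calc |∑' w, kpow P n z w * f n w| ≤ ∑' w, |kpow P n z w| :=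
          abs_tsum_mul_bounded_le (hKabs n z) (hf_abs n)
      _ = ∑' w, kpow P n z w := tsum_congr fun w => abs_of_nonneg (hK0 n z w)
      _ = 1 := (hasSum_kpow hP0 hP1 n z).tsum_eq
  have hg_diff : ∀ n, g n x - g n y = D n := by
    intro n
    rw [hg, hD]
    rw [← Summable.tsum_sub (hsg n x) (hsg n y)]
    refine tsum_congr fun w => ?_
    by_cases hc : 0 ≤ kpow P n x w - kpow P n y w
    · simp only [hf, if_pos hc]
      rw [abs_of_nonneg hc]
      ring
    · simp only [hf, if_neg hc]
      rw [abs_of_neg (not_le.mp hc)]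
      ring
  have hg_near : ∀ n z, |(∑' u, P z u * g n u) - g n z| ≤ cbound n := by
    intro n z
    have hA : (∑' u, P z u * g n u) = ∑' w, kpow P (n+1) z w * f n w := by
      have e1 : ∀ u, P z u * g n u = ∑' w, P z u * (kpow P n u w * f n w) := fun u => by
        rw [hg, tsum_mul_left]
      rw [tsum_congr e1]
      have hbnd : ∀ u w, |P z u * (kpow P n u w * f n w)| ≤ P z u * kpow P n u w := by
        intro u w
        rw [abs_mul, abs_mul, abs_of_nonneg (hP0 z u), abs_of_nonneg (hK0 n u w)]
        calc P z u * (kpow P n u w * |f n w|)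
            ≤ P z u * (kpow P n u w * 1) :=
              mul_le_mul_of_nonneg_left
                (mul_le_mul_of_nonneg_left (hf_abs n w) (hK0 n u w)) (hP0 z u)
          _ = P z u * kpow P n u w := by ring
      have h1' : ∀ u, Summable fun w => P z u * kpow P n u w :=
        fun u => (hKsum n u).mul_left _
      have h2' : Summable fun u => ∑' w, P z u * kpow P n u w := by
        refine (hP1 z).summable.congr fun u => ?_
        rw [tsum_mul_left, (hasSum_kpow hP0 hP1 n u).tsum_eq, mul_one]
      rw [← tsum_comm_of_bound hbnd h1' h2']
      refine tsum_congr fun w => ?_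
      have e2 : ∀ u, P z u * (kpow P n u w * f n w)
          = (P z u * kpow P n u w) * f n w := fun u => by ring
      rw [tsum_congr e2, tsum_mul_right, ← kpow_succ_apply]
    rw [hA, hg]
    have hsub : Summable fun w => (kpow P (n+1) z w - kpow P n z w) :=
      (hKsum (n+1) z).sub (hKsum n z)
    have hstep : (∑' w, kpow P (n+1) z w * f n w) - (∑' w, kpow P n z w * f n w)
        = ∑' w, (kpow P (n+1) z w - kpow P n z w) * f n w := by
      rw [← Summable.tsum_sub (summable_mul_bounded (hKabs (n+1) z) (hf_abs n)) (hsg n z)]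
      exact tsum_congr fun w => by ring
    rw [hstep]
    calc |∑' w, (kpow P (n+1) z w - kpow P n z w) * f n w|
        ≤ ∑' w, |kpow P (n+1) z w - kpow P n z w| :=
          abs_tsum_mul_bounded_le hsub.abs (hf_abs n)
      _ ≤ cbound n := dist_kpow_succ hP0 hP1 hl z n
  -- pass to a limit along an ultrafilter
  let U : Ultrafilter ℕ := Ultrafilter.of atTop
  have hUle : (U : Filter ℕ) ≤ atTop := Ultrafilter.of_le _
  have hlimex : ∀ z : X, ∃ c ∈ Set.Icc (-1:ℝ) 1,
      Tendsto (fun n => g n z) (U : Filter ℕ) (nhds c) := by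
    intro z
    have hmem : ∀ n, g n z ∈ Set.Icc (-1:ℝ) 1 := fun n => by
      have := abs_le.mp (hg_bdd n z)
      exact Set.mem_Icc.mpr this
    have hle : (↑(U.map (fun n => g n z)) : Filter ℝ)
        ≤ Filter.principal (Set.Icc (-1:ℝ) 1) := by
      rw [Ultrafilter.coe_map]
      refine Filter.le_principal_iff.mpr ?_
      exact Filter.mem_map.mpr (Filter.Eventually.of_forall hmem)
    obtain ⟨c, hc, hcle⟩ := (isCompact_Icc (a := (-1:ℝ)) (b := 1)).ultrafilter_le_nhds
      (U.map (fun n => g n z)) hle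
    refine ⟨c, hc, ?_⟩
    rw [Ultrafilter.coe_map] at hcle
    exact hcle
  choose h hmemIcc hlim using hlimex
  have hbd : BoundedFn h := ⟨1, fun z => abs_le.mpr ⟨(hmemIcc z).1, (hmemIcc z).2⟩⟩
  have hharm : IsHarmonic P h := by
    intro z
    have t1 : Tendsto (fun n => ∑' u, P z u * g n u) (U : Filter ℕ)
        (nhds (∑' u, P z u * h u)) := by
      refine tendsto_tsum_of_dominated_convergence (f := fun n u => P z u * g n u)
        (g := fun u => P z u * h u) (bound := P z) (hP1 z).summable
        (fun u => ((hlim u).const_mul (P z u))) ?_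
      refine Filter.Eventually.of_forall fun n => fun u => ?_
      rw [Real.norm_eq_abs, abs_mul, abs_of_nonneg (hP0 z u)]
      calc P z u * |g n u| ≤ P z u * 1 := mul_le_mul_of_nonneg_left (hg_bdd n u) (hP0 z u)
        _ = P z u := mul_one _
    have t2 : Tendsto (fun n => (∑' u, P z u * g n u) - g n z) (U : Filter ℕ) (nhds 0) := by
      have hcb : Tendsto cbound (U : Filter ℕ) (nhds 0) :=
        cbound_tendsto_zero.mono_left hUle
      refine squeeze_zero_norm (fun n => ?_) hcb
      rw [Real.norm_eq_abs]
      exact hg_near n z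
    have t3 : Tendsto (fun n => g n z) (U : Filter ℕ) (nhds (∑' u, P z u * h u)) := by
      have t4 := t1.sub t2
      simp only [sub_sub_cancel, sub_zero] at t4
      exact t4
    exact tendsto_nhds_unique (hlim z) t3
  have hxy := hLiou h hbd hharm x y
  have hDf : Tendsto (fun n => g n x - g n y) (U : Filter ℕ) (nhds (h x - h y)) :=
    (hlim x).sub (hlim y)
  have hDL : Tendsto (fun n => g n x - g n y) (U : Filter ℕ) (nhds L) := by
    have t5 := hten.mono_left hUle
    exact t5.congr fun n => (hg_diff n).symm
  have hfin : h x - h y = L := tendsto_nhds_unique hDf hDL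
  rw [hxy, sub_self] at hfin
  exact absurd hfin.symm (ne_of_gt hpos)
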